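/- The spiral-arc functions 𝔞 and 𝔟 solve the holonomy ODE system: for all t ∈ ℝ, 𝔞'(t) = i c (ν 𝔞(t) − μ e^{iλt} · conj(𝔟(t))) and 𝔟'(t) = i c (ν 𝔟(t) + μ e^{iλt} · conj(𝔞(t))), with initial conditions 𝔞(0) = 1 and 𝔟(0) = 0. -/

import Mathlib

open Complex

/-- The spiral-arc functions `𝔞` and `𝔟` solve the holonomy ODE system
`𝔞' = ic(ν 𝔞 − μ e^{iλt} conj 𝔟)`, `𝔟' = ic(ν 𝔟 + μ e^{iλt} conj 𝔞)`, with
`𝔞(0) = 1`, `𝔟(0) = 0`. -/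
theorem spiral_solves_holonomy_ODE (c lam ν : ℝ) (μ : ℂ)
    (hnorm : ν ^ 2 + ‖μ‖ ^ 2 = 1)
    (Δ : ℝ) (hΔdef : Δ = Real.sqrt (lam ^ 2 / 4 + c ^ 2 - ν * lam * c)) (hΔpos : 0 < Δ)
    (𝔞 𝔟 : ℝ → ℂ)
    (ha : ∀ t : ℝ, 𝔞 t = Complex.exp (Complex.I * lam * t / 2) *
        ((Real.cos (Δ * t) : ℂ) +
          Complex.I * (2 * ν * c - lam : ℝ) / (2 * Δ : ℝ) * (Real.sin (Δ * t) : ℂ)))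
    (hb : ∀ t : ℝ, 𝔟 t = μ * Complex.exp (Complex.I * lam * t / 2) *
        (Complex.I * c / (Δ : ℝ)) * (Real.sin (Δ * t) : ℂ)) :
    𝔞 0 = 1 ∧ 𝔟 0 = 0 ∧
    (∀ t : ℝ, HasDerivAt 𝔞
      (Complex.I * c * ((ν : ℂ) * 𝔞 t -
        μ * Complex.exp (Complex.I * lam * t) * (starRingEnd ℂ) (𝔟 t))) t) ∧
    (∀ t : ℝ, HasDerivAt 𝔟
      (Complex.I * c * ((ν : ℂ) * 𝔟 t +
        μ * Complex.exp (Complex.I * lam * t) * (starRingEnd ℂ) (𝔞 t))) t) := by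
  have hΔ0 : (Δ:ℂ) ≠ 0 := by exact_mod_cast hΔpos.ne'
  have hXnn : 0 ≤ lam ^ 2 / 4 + c ^ 2 - ν * lam * c := by
    by_contra h
    push_neg at h
    rw [hΔdef, Real.sqrt_eq_zero_of_nonpos h.le] at hΔpos
    exact lt_irrefl 0 hΔpos
  have hΔ2 : (Δ:ℝ)^2 = lam^2/4 + c^2 - ν*lam*c := by rw [hΔdef]; exact Real.sq_sqrt hXnn
  have hΔ2c : (Δ:ℂ)^2 = (lam:ℂ)^2/4 + (c:ℂ)^2 - (ν:ℂ)*(lam:ℂ)*(c:ℂ) := by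
    exact_mod_cast congrArg (fun x : ℝ => (x:ℂ)) hΔ2
  have hμ : μ * (starRingEnd ℂ) μ = 1 - (ν:ℂ)^2 := by
    rw [Complex.mul_conj]
    have h1 : (Complex.normSq μ : ℝ) = 1 - ν^2 := by
      rw [Complex.normSq_eq_norm_sq]; linarith
    rw [h1]; push_cast; ring
  refine ⟨by simp [ha 0], by simp [hb 0], ?_, ?_⟩
  all_goals intro t
  all_goals
    have hinner : HasDerivAt (fun s : ℝ => Complex.I * lam * s / 2) (Complex.I * lam / 2) t := by
      simpa using ((Complex.ofRealCLM.hasDerivAt (x := t)).const_mul (Complex.I * lam)).div_const 2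
    have hC := (((hasDerivAt_id t).const_mul Δ).cos).ofReal_comp
    have hS := (((hasDerivAt_id t).const_mul Δ).sin).ofReal_comp
    have hconjE : (starRingEnd ℂ) (Complex.exp (Complex.I * lam * t / 2))
        = Complex.exp (-(Complex.I * lam * t / 2)) := by
      rw [← Complex.exp_conj]
      congr 1
      simp [map_div₀, Complex.conj_ofReal, map_ofNat]
      ring
    have hEF : Complex.exp (Complex.I * lam * t / 2) * Complex.exp (-(Complex.I * lam * t / 2)) = 1 := by
      rw [← Complex.exp_add]; simp
    have hEE : Complex.exp (Complex.I * lam * (t:ℝ)) =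
        Complex.exp (Complex.I * lam * t / 2) * Complex.exp (Complex.I * lam * t / 2) := by
      rw [← Complex.exp_add]; ring_nf
  · -- derivative of 𝔞
    have hsum := hC.add (hS.const_mul (Complex.I * ((2 * ν * c - lam : ℝ) : ℂ) / ((2 * Δ : ℝ) : ℂ)))
    have hA := (hinner.cexp).mul hsum
    have hfun : 𝔞 = fun s : ℝ => Complex.exp (Complex.I * lam * s / 2) *
        ((Real.cos (Δ * s) : ℂ) +
          Complex.I * (2 * ν * c - lam : ℝ) / (2 * Δ : ℝ) * (Real.sin (Δ * s) : ℂ)) := funext ha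
    rw [hfun]
    convert hA using 1
    · rfl
    · rfl
    rw [hb t, hEE]
    simp only [map_mul, map_div₀, Complex.conj_I, Complex.conj_ofReal, hconjE]
    set E := Complex.exp (Complex.I * lam * t / 2)
    set F := Complex.exp (-(Complex.I * lam * t / 2))
    simp only [id_eq, Pi.add_apply]
    push_cast
    field_simp
    linear_combination
      (4*Complex.I^2*(c:ℂ)^2*E*Complex.sin ((Δ:ℂ) * (t:ℂ))*μ*(starRingEnd ℂ) μ) * hEF +
      (4*Complex.I^2*(c:ℂ)^2*E*Complex.sin ((Δ:ℂ) * (t:ℂ))) * hμ + (4*E*Complex.sin ((Δ:ℂ) * (t:ℂ))) * hΔ2c +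
      (E*Complex.sin ((Δ:ℂ) * (t:ℂ))*(4*(c:ℂ)^2-4*(c:ℂ)*(ν:ℂ)*(lam:ℂ)+(lam:ℂ)^2)) * Complex.I_sq
  · -- derivative of 𝔟
    have hB := (((hinner.cexp).const_mul μ).mul_const (Complex.I * (c:ℂ) / ((Δ:ℝ):ℂ))).mul hS
    have hfun : 𝔟 = fun s : ℝ => μ * Complex.exp (Complex.I * lam * s / 2) *
        (Complex.I * c / (Δ : ℝ)) * (Real.sin (Δ * s) : ℂ) := funext hb
    rw [hfun]
    convert hB using 1
    · rfl
    · rfl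
    rw [ha t, hEE]
    simp only [map_mul, map_div₀, map_add, Complex.conj_I, Complex.conj_ofReal, hconjE]
    set E := Complex.exp (Complex.I * lam * t / 2)
    set F := Complex.exp (-(Complex.I * lam * t / 2))
    simp only [id_eq, Pi.add_apply]
    push_cast
    field_simp
    linear_combination
      ((c:ℂ)*μ*E*((Δ:ℂ)*Complex.cos ((Δ:ℂ) * (t:ℂ))*2 - Complex.I*Complex.sin ((Δ:ℂ) * (t:ℂ))*((c:ℂ)*(ν:ℂ)*2-(lam:ℂ)))) * hEF
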